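/- For n ≥ 3 and 2 ≤ d ≤ n−1, the general d-position number of the path P_n equals 2⌈n/(d+1)⌉ − 1 if n ≡ 1 (mod d+1), and 2⌈n/(d+1)⌉ otherwise. -/
import Mathlib


/-- `S` is a general `d`-position set of `G`: no three distinct vertices of `S`
lie on a common geodesic of length at most `d`. -/
def IsGenDPos {V : Type*} (G : SimpleGraph V) (d : ℕ) (S : Set V) : Prop :=
  ∀ ⦃u v w : V⦄, u ∈ S → v ∈ S → w ∈ S → u ≠ v → u ≠ w → v ≠ w →
    G.dist u v + G.dist v w = G.dist u w → G.dist u w ≤ d → False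

/-- The general `d`-position number of `G`. -/
noncomputable def gpNum {V : Type*} (G : SimpleGraph V) (d : ℕ) : ℕ :=
  sSup {n | ∃ S : Set V, IsGenDPos G d S ∧ S.ncard = n}

namespace GpAux

open SimpleGraph

lemma walk_len_ge (n : ℕ) (u v : Fin n) (p : (pathGraph n).Walk u v) :
    Nat.dist u.val v.val ≤ p.length := by
  induction p with
  | nil => simp [Nat.dist_self]
  | @cons a b c h q ih =>
    have h1 : Nat.dist a.val b.val = 1 := by
      rw [pathGraph_adj] at h; rcases h with h | h <;> simp [Nat.dist, *] <;> omega
    calc Nat.dist a.val c.val ≤ Nat.dist a.val b.val + Nat.dist b.val c.val :=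
      Nat.dist.triangle_inequality _ _ _
    _ ≤ 1 + q.length := by rw [h1]; omega
    _ = (SimpleGraph.Walk.cons h q).length := by simp [Walk.length_cons]; omega

lemma walk_of_add (n : ℕ) : ∀ (k : ℕ) (u v : Fin n), u.val + k = v.val →
    ∃ p : (pathGraph n).Walk u v, p.length = k := by
  intro k
  induction k with
  | zero => intro u v h; have : u = v := Fin.ext (by omega); subst this; exact ⟨Walk.nil, rfl⟩
  | succ k ih =>
    intro u v h
    have hlt : u.val + 1 < n := by have := v.isLt; omega
    set u' : Fin n := ⟨u.val + 1, hlt⟩ with hu'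
    have hadj : (pathGraph n).Adj u u' := by rw [pathGraph_adj]; left; rfl
    obtain ⟨p, hp⟩ := ih u' v (by simp [hu']; omega)
    exact ⟨Walk.cons hadj p, by simp [hp]⟩

lemma pathGraph_dist (n : ℕ) (u v : Fin n) : (pathGraph n).dist u v = Nat.dist u.val v.val := by
  apply le_antisymm
  · rcases le_total u.val v.val with h | h
    · obtain ⟨p, hp⟩ := walk_of_add n (v.val - u.val) u v (by omega)
      calc (pathGraph n).dist u v ≤ p.length := dist_le p
      _ = Nat.dist u.val v.val := by rw [hp, Nat.dist_eq_sub_of_le h]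
    · obtain ⟨p, hp⟩ := walk_of_add n (u.val - v.val) v u (by omega)
      calc (pathGraph n).dist u v ≤ p.reverse.length := dist_le p.reverse
      _ = Nat.dist u.val v.val := by
          rw [Walk.length_reverse, hp, Nat.dist_comm, Nat.dist_eq_sub_of_le h]
  · have hr : (pathGraph n).Reachable u v := by
      rcases le_total u.val v.val with h | h
      · obtain ⟨p, _⟩ := walk_of_add n (v.val - u.val) u v (by omega); exact ⟨p⟩
      · obtain ⟨p, _⟩ := walk_of_add n (u.val - v.val) v u (by omega); exact ⟨p.reverse⟩
    obtain ⟨p, hp⟩ := hr.exists_walk_length_eq_dist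
    rw [← hp]
    exact walk_len_ge n u v p

lemma ordered_cond {n d : ℕ} {S : Set (Fin n)} (hS : IsGenDPos (pathGraph n) d S) :
    ∀ x y z : Fin n, x ∈ S → y ∈ S → z ∈ S → x.val < y.val → y.val < z.val →
      z.val ≤ x.val + d → False := by
  intro x y z hx hy hz hxy hyz hspan
  refine hS hx hy hz (fun h => by simp [h] at hxy) (fun h => by simp [h] at hxy; omega)
    (fun h => by simp [h] at hyz) ?_ ?_
  · rw [pathGraph_dist, pathGraph_dist, pathGraph_dist,
      Nat.dist_eq_sub_of_le hxy.le, Nat.dist_eq_sub_of_le hyz.le,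
      Nat.dist_eq_sub_of_le (hxy.le.trans hyz.le)]
    omega
  · rw [pathGraph_dist, Nat.dist_eq_sub_of_le (hxy.le.trans hyz.le)]; omega

lemma sorted3 {n : ℕ} {a b c : Fin n} (hab : a ≠ b) (hac : a ≠ c) (hbc : b ≠ c) :
    ∃ x y z : Fin n, x ∈ ({a, b, c} : Set (Fin n)) ∧ y ∈ ({a, b, c} : Set (Fin n)) ∧
      z ∈ ({a, b, c} : Set (Fin n)) ∧ x.val < y.val ∧ y.val < z.val := by
  have hab' : a.val ≠ b.val := fun h => hab (Fin.ext h)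
  have hac' : a.val ≠ c.val := fun h => hac (Fin.ext h)
  have hbc' : b.val ≠ c.val := fun h => hbc (Fin.ext h)
  rcases lt_trichotomy a.val b.val with h1 | h1 | h1 <;>
  rcases lt_trichotomy b.val c.val with h2 | h2 | h2 <;>
  rcases lt_trichotomy a.val c.val with h3 | h3 | h3 <;>
  first
  | exact ⟨a, b, c, by simp, by simp, by simp, by omega, by omega⟩
  | exact ⟨a, c, b, by simp, by simp, by simp, by omega, by omega⟩
  | exact ⟨b, a, c, by simp, by simp, by simp, by omega, by omega⟩
  | exact ⟨b, c, a, by simp, by simp, by simp, by omega, by omega⟩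
  | exact ⟨c, a, b, by simp, by simp, by simp, by omega, by omega⟩
  | exact ⟨c, b, a, by simp, by simp, by simp, by omega, by omega⟩

lemma upper_bound (n d : ℕ) (hn : 3 ≤ n) (hd : 2 ≤ d) (S : Set (Fin n))
    (hS : IsGenDPos (pathGraph n) d S) :
    S.ncard ≤ if n % (d + 1) = 1 then 2 * ((n + d) / (d + 1)) - 1
      else 2 * ((n + d) / (d + 1)) := by
  classical
  have H := ordered_cond hS
  have hD : 0 < d + 1 := by omega
  have h1' := Nat.div_add_mod (n + d) (d + 1)
  have h2' := Nat.mod_lt (n + d) hD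
  have hnq0 : n ≤ (d + 1) * ((n + d) / (d + 1)) := by omega
  clear h1' h2'
  set q := (n + d) / (d + 1) with hqdef
  have hnq : n ≤ q * (d + 1) := by rw [mul_comm]; exact hnq0
  have hmem : ∀ x ∈ S.toFinset, x.val / (d + 1) ∈ Finset.range q := by
    intro x _
    rw [Finset.mem_range, Nat.div_lt_iff_lt_mul hD]
    exact lt_of_lt_of_le x.isLt hnq
  have hcard : S.toFinset.card =
      ∑ k ∈ Finset.range q, (S.toFinset.filter (fun x => x.val / (d + 1) = k)).card :=
    Finset.card_eq_sum_card_fiberwise hmem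
  have hfib : ∀ k, (S.toFinset.filter (fun x => x.val / (d + 1) = k)).card ≤ 2 := by
    intro k
    by_contra h
    push_neg at h
    obtain ⟨a, b, c, ha, hb, hc, hab, hac, hbc⟩ := Finset.two_lt_card_iff.mp h
    simp only [Finset.mem_filter, Set.mem_toFinset] at ha hb hc
    have bnd : ∀ w : Fin n, w.val / (d + 1) = k →
        (d + 1) * k ≤ w.val ∧ w.val ≤ (d + 1) * k + d := by
      intro w hw
      constructor
      · calc (d + 1) * k = w.val / (d + 1) * (d + 1) := by rw [hw]; ring
        _ ≤ w.val := Nat.div_mul_le_self _ _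
      · have h3 := Nat.div_add_mod w.val (d + 1)
        have h4 := Nat.mod_lt w.val hD
        rw [hw] at h3
        omega
    obtain ⟨x, y, z, hx, hy, hz, hxy, hyz⟩ := sorted3 hab hac hbc
    have hxS : x ∈ S ∧ (d+1)*k ≤ x.val ∧ x.val ≤ (d+1)*k + d := by
      rcases hx with h | h | h <;> subst h <;>
        first
          | exact ⟨ha.1, bnd _ ha.2⟩ | exact ⟨hb.1, bnd _ hb.2⟩ | exact ⟨hc.1, bnd _ hc.2⟩
    have hyS : y ∈ S := by
      rcases hy with h | h | h <;> subst h <;> first | exact ha.1 | exact hb.1 | exact hc.1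
    have hzS : z ∈ S ∧ (d+1)*k ≤ z.val ∧ z.val ≤ (d+1)*k + d := by
      rcases hz with h | h | h <;> subst h <;>
        first
          | exact ⟨ha.1, bnd _ ha.2⟩ | exact ⟨hb.1, bnd _ hb.2⟩ | exact ⟨hc.1, bnd _ hc.2⟩
    exact H x y z hxS.1 hyS hzS.1 hxy hyz (by omega)
  rw [Set.ncard_eq_toFinset_card', hcard]
  by_cases hr : n % (d + 1) = 1
  · have h1 := Nat.div_add_mod n (d + 1)
    set q0 := n / (d + 1) with hq0def
    have hq : q = q0 + 1 := by
      have h5 : n + d = (d + 1) * (q0 + 1) := by rw [Nat.mul_add, Nat.mul_one]; omega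
      rw [hqdef, h5, Nat.mul_div_cancel_left _ hD]
    have hlast : (S.toFinset.filter (fun x => x.val / (d + 1) = q0)).card ≤ 1 := by
      rw [Finset.card_le_one]
      intro a ha b hb
      simp only [Finset.mem_filter] at ha hb
      have ba := (Nat.div_mul_le_self a.val (d+1))
      have bb := (Nat.div_mul_le_self b.val (d+1))
      rw [ha.2] at ba; rw [hb.2] at bb
      rw [mul_comm] at ba bb
      have ha' : a.val = n - 1 := by have := a.isLt; omega
      have hb' : b.val = n - 1 := by have := b.isLt; omega
      exact Fin.ext (by omega)
    rw [if_pos hr, hq, Finset.sum_range_succ]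
    have hrest : ∑ k ∈ Finset.range q0,
        (S.toFinset.filter (fun x => x.val / (d + 1) = k)).card ≤ 2 * q0 := by
      calc _ ≤ ∑ _k ∈ Finset.range q0, 2 := Finset.sum_le_sum (fun k _ => hfib k)
      _ = 2 * q0 := by simp [mul_comm]
    omega
  · rw [if_neg hr]
    calc _ ≤ ∑ _k ∈ Finset.range q, 2 := Finset.sum_le_sum (fun k _ => hfib k)
    _ = 2 * q := by simp [mul_comm]

lemma arith_key (d x y z : ℕ) (hd : 2 ≤ d)
    (hx : x % (d + 1) ≤ 1) (hy : y % (d + 1) ≤ 1) (hz : z % (d + 1) ≤ 1)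
    (h1 : x < y) (h2 : y < z) (h3 : z ≤ x + d) : False := by
  have hD : 0 < d + 1 := by omega
  have ex := Nat.div_add_mod x (d + 1)
  have ey := Nat.div_add_mod y (d + 1)
  have ez := Nat.div_add_mod z (d + 1)
  have hxy : x / (d + 1) ≤ y / (d + 1) := Nat.div_le_div_right h1.le
  have hyz : y / (d + 1) ≤ z / (d + 1) := Nat.div_le_div_right h2.le
  have hzx : z / (d + 1) ≤ x / (d + 1) + 1 := by
    have h6 : z ≤ (d + 1) * (x / (d + 1) + 1) := by rw [Nat.mul_add, Nat.mul_one]; omega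
    have h7 := Nat.div_le_div_right (c := d + 1) h6
    rwa [Nat.mul_div_cancel_left _ hD] at h7
  have hcase : z / (d + 1) = x / (d + 1) ∨ z / (d + 1) = x / (d + 1) + 1 := by omega
  rcases hcase with h | h
  · have hyx : y / (d + 1) = x / (d + 1) := by omega
    rw [h] at ez; rw [hyx] at ey
    omega
  · rw [h, Nat.mul_add, Nat.mul_one] at ez
    have hycase : y / (d + 1) = x / (d + 1) ∨ y / (d + 1) = x / (d + 1) + 1 := by omega
    rcases hycase with h' | h'
    · rw [h'] at ey; omega
    · rw [h', Nat.mul_add, Nat.mul_one] at ey; omega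

lemma construction_pos (n d : ℕ) (hd : 2 ≤ d) :
    IsGenDPos (pathGraph n) d {x : Fin n | x.val % (d + 1) ≤ 1} := by
  intro u v w hu hv hw huv huw hvw heq hle
  simp only [Set.mem_setOf_eq] at hu hv hw
  rw [pathGraph_dist, pathGraph_dist, pathGraph_dist] at heq
  rw [pathGraph_dist] at hle
  simp only [Nat.dist] at heq hle
  have huv' : u.val ≠ v.val := fun h => huv (Fin.ext h)
  have huw' : u.val ≠ w.val := fun h => huw (Fin.ext h)
  have hvw' : v.val ≠ w.val := fun h => hvw (Fin.ext h)
  rcases Nat.lt_or_ge u.val w.val with h | h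
  · have hb : u.val < v.val ∧ v.val < w.val := by omega
    exact arith_key d u.val v.val w.val hd hu hv hw hb.1 hb.2 (by omega)
  · have h' : w.val < u.val := by omega
    have hb : w.val < v.val ∧ v.val < u.val := by omega
    exact arith_key d w.val v.val u.val hd hw hv hu hb.1 hb.2 (by omega)

lemma construction_card (n d : ℕ) (hn : 3 ≤ n) (hd : 2 ≤ d) :
    ({x : Fin n | x.val % (d + 1) ≤ 1}).ncard =
      2 * (n / (d + 1)) + min (n % (d + 1)) 2 := by
  classical
  have hD : 0 < d + 1 := by omega
  set S : Set (Fin n) := {x : Fin n | x.val % (d + 1) ≤ 1} with hSdef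
  set q0 := n / (d + 1) with hq0
  set r := n % (d + 1) with hr
  obtain ⟨mr, hmr⟩ : ∃ mr, min r 2 = mr := ⟨_, rfl⟩
  have hmr2 : (r ≤ 2 ∧ mr = r) ∨ (2 ≤ r ∧ mr = 2) := by
    rcases le_total r 2 with h | h
    · exact Or.inl ⟨h, by rw [← hmr, min_eq_left h]⟩
    · exact Or.inr ⟨h, by rw [← hmr, min_eq_right h]⟩
  set m := 2 * q0 + mr with hm
  set f : ℕ → ℕ := fun j => (d + 1) * (j / 2) + j % 2 with hf
  have hfmod : ∀ j, f j % (d + 1) = j % 2 := by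
    intro j
    rw [hf]
    simp only
    rw [Nat.mul_add_mod]
    exact Nat.mod_eq_of_lt (by omega)
  have hfdiv : ∀ j, f j / (d + 1) = j / 2 := by
    intro j
    rw [hf]
    simp only
    have h0 : j % 2 / (d + 1) = 0 := Nat.div_eq_of_lt (by omega)
    rw [Nat.mul_add_div hD, h0, Nat.add_zero]
  have hinj : Function.Injective f := by
    intro a b h
    have h1 : a % 2 = b % 2 := by rw [← hfmod a, ← hfmod b, h]
    have h2 : a / 2 = b / 2 := by rw [← hfdiv a, ← hfdiv b, h]
    omega
  have hn0 := Nat.div_add_mod n (d + 1)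
  rw [← hq0, ← hr] at hn0
  have e1 : S.toFinset.image Fin.val = (Finset.range n).filter (fun i => i % (d + 1) ≤ 1) := by
    ext i
    simp only [Finset.mem_image, Set.mem_toFinset, hSdef, Set.mem_setOf_eq, Finset.mem_filter,
      Finset.mem_range]
    constructor
    · rintro ⟨x, hx, rfl⟩; exact ⟨x.isLt, hx⟩
    · rintro ⟨hi, hmod⟩; exact ⟨⟨i, hi⟩, hmod, rfl⟩
  have e2 : (Finset.range n).filter (fun i => i % (d + 1) ≤ 1) = (Finset.range m).image f := by
    ext i
    simp only [Finset.mem_filter, Finset.mem_range, Finset.mem_image]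
    constructor
    · rintro ⟨hi, hmod⟩
      refine ⟨2 * (i / (d + 1)) + i % (d + 1), ?_, ?_⟩
      · have hle : i / (d + 1) ≤ q0 := by
          rw [hq0]; exact Nat.div_le_div_right hi.le
        have ei := Nat.div_add_mod i (d + 1)
        rcases Nat.lt_or_ge (i / (d + 1)) q0 with hc | hc
        · omega
        · have hc' : i / (d + 1) = q0 := by omega
          rw [hc'] at ei ⊢
          omega
      · have hj2 : (2 * (i / (d + 1)) + i % (d + 1)) / 2 = i / (d + 1) ∧
            (2 * (i / (d + 1)) + i % (d + 1)) % 2 = i % (d + 1) := by omega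
        rw [hf]
        simp only
        rw [hj2.1, hj2.2]
        exact Nat.div_add_mod i (d + 1)
    · rintro ⟨j, hj, rfl⟩
      have hmod := hfmod j
      have hdiv := hfdiv j
      refine ⟨?_, by omega⟩
      have hj2 : j / 2 ≤ q0 := by omega
      rcases Nat.lt_or_ge (j / 2) q0 with hc | hc
      · have : (d + 1) * (j / 2 + 1) ≤ (d + 1) * q0 := Nat.mul_le_mul_left _ (by omega)
        rw [Nat.mul_add, Nat.mul_one] at this
        rw [hf]; simp only
        omega
      · have hc' : j / 2 = q0 := by omega
        rw [hf]; simp only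
        rw [hc']
        omega
  have hcard : S.ncard = m := by
    rw [Set.ncard_eq_toFinset_card']
    have := Finset.card_image_of_injective S.toFinset (Fin.val_injective)
    rw [← this, e1, e2, Finset.card_image_of_injective _ hinj, Finset.card_range]
  rw [hcard, hm, hq0, hr, ← hmr]

lemma rhs_eq (n d : ℕ) (hn : 3 ≤ n) (hd : 2 ≤ d) :
    (if n % (d + 1) = 1 then 2 * ((n + d) / (d + 1)) - 1 else 2 * ((n + d) / (d + 1)))
      = 2 * (n / (d + 1)) + min (n % (d + 1)) 2 := by
  have hD : 0 < d + 1 := by omega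
  have hn0 := Nat.div_add_mod n (d + 1)
  have hrlt := Nat.mod_lt n hD
  set q0 := n / (d + 1) with hq0
  set r := n % (d + 1) with hr
  rcases Nat.eq_zero_or_pos r with h0 | h0
  · have h5 : n + d = (d + 1) * q0 + d := by omega
    have hq : (n + d) / (d + 1) = q0 := by
      rw [h5, Nat.mul_add_div hD, Nat.div_eq_of_lt (by omega), Nat.add_zero]
    rw [hq, if_neg (by omega), h0]
    simp
  · have h5 : n + d = (d + 1) * (q0 + 1) + (r - 1) := by
      have he : (d + 1) * (q0 + 1) = (d + 1) * q0 + (d + 1) := by ring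
      omega
    have hq : (n + d) / (d + 1) = q0 + 1 := by
      rw [h5, Nat.mul_add_div hD, Nat.div_eq_of_lt (by omega), Nat.add_zero]
    rw [hq]
    by_cases h1 : r = 1
    · rw [if_pos h1, h1]
      omega
    · rw [if_neg h1]
      have : min r 2 = 2 := min_eq_right (by omega)
      omega

end GpAux

/-- The general d-position number of the path P_n. -/
theorem stmt_4 (n d : ℕ) (hn : 3 ≤ n) (hd : 2 ≤ d) (hdn : d ≤ n - 1) :
    gpNum (SimpleGraph.pathGraph n) d =
      if n % (d + 1) = 1 then 2 * ((n + d) / (d + 1)) - 1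
      else 2 * ((n + d) / (d + 1)) := by
  set B := if n % (d + 1) = 1 then 2 * ((n + d) / (d + 1)) - 1 else 2 * ((n + d) / (d + 1))
    with hB
  have hmem : B ∈ {m | ∃ S : Set (Fin n), IsGenDPos (SimpleGraph.pathGraph n) d S ∧
      S.ncard = m} := by
    refine ⟨{x : Fin n | x.val % (d + 1) ≤ 1}, GpAux.construction_pos n d hd, ?_⟩
    rw [GpAux.construction_card n d hn hd, hB, GpAux.rhs_eq n d hn hd]
  have hub : ∀ m ∈ {m | ∃ S : Set (Fin n), IsGenDPos (SimpleGraph.pathGraph n) d S ∧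
      S.ncard = m}, m ≤ B := by
    rintro m ⟨S, hS, rfl⟩
    exact GpAux.upper_bound n d hn hd S hS
  exact IsGreatest.csSup_eq ⟨hmem, hub⟩
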